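/- Let A be an associative algebra, f ∈ A an invertible element such that ad f acts locally nilpotently on A, and for a ∈ ℂ define Θ_a(u) = Σ_{i≥0} binom(a,i) (ad f)^i(u) f^{−i} (a finite sum for each u). Then Θ_0 = id and for a, b ∈ ℂ, Θ_a ∘ Θ_b = Θ_{a+b}. -/

import Mathlib

/-- The generalized binomial coefficient `C(a, i) = a(a-1)⋯(a-i+1)/i!` for `a ∈ ℂ`. -/
noncomputable def genBinom (a : ℂ) (i : ℕ) : ℂ :=
  (∏ k ∈ Finset.range i, (a - k)) / (Nat.factorial i)

open Finset

lemma genBinom_zero (a : ℂ) : genBinom a 0 = 1 := by simp [genBinom]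

lemma genBinom_zero_left {i : ℕ} (hi : i ≠ 0) : genBinom 0 i = 0 := by
  have : ∏ k ∈ Finset.range i, ((0:ℂ) - k) = 0 :=
    Finset.prod_eq_zero (Finset.mem_range.mpr (Nat.pos_of_ne_zero hi)) (by simp)
  rw [genBinom, this, zero_div]

lemma descPochhammer_eval_prod (a : ℂ) (n : ℕ) :
    (descPochhammer ℂ n).eval a = ∏ k ∈ Finset.range n, (a - k) := by
  induction n with
  | zero => simp
  | succ n ih => rw [descPochhammer_succ_eval, ih, Finset.prod_range_succ]

lemma genBinom_eq_choose (a : ℂ) (n : ℕ) : genBinom a n = Ring.choose a n := by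
  have h := Ring.descPochhammer_eq_factorial_smul_choose a n
  have h2 : (descPochhammer ℤ n).smeval a = (descPochhammer ℂ n).eval a := by
    rw [← Polynomial.aeval_eq_smeval, ← Polynomial.eval_map_algebraMap,
      descPochhammer_map]
  rw [h2, descPochhammer_eval_prod] at h
  have hf : ((n.factorial : ℂ)) ≠ 0 := Nat.cast_ne_zero.mpr n.factorial_ne_zero
  rw [genBinom, h, nsmul_eq_mul]
  field_simp

lemma genBinom_vandermonde (a b : ℂ) (n : ℕ) :
    genBinom (a + b) n = ∑ i ∈ Finset.range (n + 1), genBinom a i * genBinom b (n - i) := by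
  rw [genBinom_eq_choose, Ring.add_choose_eq n (Commute.all a b),
    Finset.Nat.sum_antidiagonal_eq_sum_range_succ_mk]
  simp [genBinom_eq_choose]

section
variable {A : Type*} [Ring A] [Algebra ℂ A] (f : Aˣ)

lemma Dit_smul (i : ℕ) (c : ℂ) (v : A) :
    (fun v => (f : A) * v - v * (f : A))^[i] (c • v)
      = c • (fun v => (f : A) * v - v * (f : A))^[i] v := by
  induction i generalizing v with
  | zero => simp
  | succ i ih =>
      rw [Function.iterate_succ_apply, Function.iterate_succ_apply]
      show (fun v => (f : A) * v - v * (f : A))^[i] ((f : A) * (c • v) - (c • v) * (f : A)) = _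
      rw [mul_smul_comm, smul_mul_assoc, ← smul_sub]
      exact ih _

lemma Dit_sum (i : ℕ) {ι : Type*} (s : Finset ι) (g : ι → A) :
    (fun v => (f : A) * v - v * (f : A))^[i] (∑ x ∈ s, g x)
      = ∑ x ∈ s, (fun v => (f : A) * v - v * (f : A))^[i] (g x) := by
  induction i generalizing g with
  | zero => simp
  | succ i ih =>
      rw [Function.iterate_succ_apply]
      show (fun v => (f : A) * v - v * (f : A))^[i]
        ((f : A) * (∑ x ∈ s, g x) - (∑ x ∈ s, g x) * (f : A)) = _
      rw [Finset.mul_sum, Finset.sum_mul, ← Finset.sum_sub_distrib, ih]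
      exact Finset.sum_congr rfl fun x _ => (Function.iterate_succ_apply _ i (g x)).symm

lemma Dit_mul_inv_pow (i j : ℕ) (v : A) :
    (fun v => (f : A) * v - v * (f : A))^[i] (v * ((f⁻¹ : Aˣ) : A) ^ j)
      = (fun v => (f : A) * v - v * (f : A))^[i] v * ((f⁻¹ : Aˣ) : A) ^ j := by
  have hc : Commute ((f : A)) (((f⁻¹ : Aˣ) : A) ^ j) :=
    ((Commute.refl (f : A)).units_inv_right).pow_right j
  induction i generalizing v with
  | zero => simp
  | succ i ih =>
      rw [Function.iterate_succ_apply, Function.iterate_succ_apply]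
      show (fun v => (f : A) * v - v * (f : A))^[i]
        ((f : A) * (v * ((f⁻¹ : Aˣ) : A) ^ j) - v * ((f⁻¹ : Aˣ) : A) ^ j * (f : A)) = _
      have harg : (f : A) * (v * ((f⁻¹ : Aˣ) : A) ^ j) - v * ((f⁻¹ : Aˣ) : A) ^ j * (f : A)
          = ((f : A) * v - v * (f : A)) * ((f⁻¹ : Aˣ) : A) ^ j := by
        rw [sub_mul, mul_assoc v ((f : A)), hc.eq, ← mul_assoc, ← mul_assoc]
      rw [harg]
      exact ih _

lemma Dit_zero (k : ℕ) : (fun v => (f : A) * v - v * (f : A))^[k] (0 : A) = 0 := by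
  induction k with
  | zero => simp
  | succ k ih =>
      rw [Function.iterate_succ_apply]
      show (fun v => (f : A) * v - v * (f : A))^[k] ((f : A) * 0 - 0 * (f : A)) = 0
      simpa using ih

lemma Dit_eventually (N : ℕ) (u : A)
    (hN : (fun v => (f : A) * v - v * (f : A))^[N] u = 0) (m : ℕ) (hm : N ≤ m) :
    (fun v => (f : A) * v - v * (f : A))^[m] u = 0 := by
  obtain ⟨k, rfl⟩ := Nat.exists_eq_add_of_le hm
  rw [add_comm, Function.iterate_add_apply, hN, Dit_zero]

end

open Finset in
lemma triangle_sum {M : Type*} [AddCommMonoid M] (N : ℕ) (F : ℕ → ℕ → M)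
    (hF : ∀ i j, N ≤ i + j → F i j = 0) :
    ∑ i ∈ range N, ∑ j ∈ range N, F i j
      = ∑ n ∈ range N, ∑ i ∈ range (n + 1), F i (n - i) := by
  have hrhs : ∀ n, ∑ i ∈ range (n + 1), F i (n - i)
      = ∑ p ∈ Finset.HasAntidiagonal.antidiagonal n, F p.1 p.2 := fun n =>
    (Finset.Nat.sum_antidiagonal_eq_sum_range_succ_mk (fun p => F p.1 p.2) n).symm
  simp_rw [hrhs]
  rw [← Finset.sum_product']
  rw [← Finset.sum_biUnion (by
    intro x _ y _ hxy
    simp only [Function.onFun, Finset.disjoint_left]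
    intro p hpx hpy
    exact hxy (by rw [← Finset.HasAntidiagonal.mem_antidiagonal.mp hpx, Finset.HasAntidiagonal.mem_antidiagonal.mp hpy]))]
  refine (Finset.sum_subset ?_ ?_).symm
  · intro p hp
    simp only [Finset.mem_biUnion, Finset.HasAntidiagonal.mem_antidiagonal, mem_range] at hp
    obtain ⟨n, hn, h⟩ := hp
    simp only [Finset.mem_product, mem_range]
    omega
  · intro p _ hnp
    refine hF p.1 p.2 ?_
    by_contra h
    push_neg at h
    exact hnp (Finset.mem_biUnion.mpr
      ⟨p.1 + p.2, mem_range.mpr h, Finset.HasAntidiagonal.mem_antidiagonal.mpr rfl⟩)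

/-- Let `A` be an associative ℂ-algebra, `f ∈ A` invertible with `ad f`
locally nilpotent, and `Θ_a(u) = Σ_{i ≥ 0} binom(a,i) (ad f)^i(u) f^{-i}` (the sum being
finite for each `u`).  Then `Θ_0 = id` and `Θ_a ∘ Θ_b = Θ_{a+b}`. -/
theorem stmt_7 {A : Type*} [Ring A] [Algebra ℂ A] (f : Aˣ)
    (hnil : ∀ u : A, ∃ N : ℕ, (fun v => (f : A) * v - v * (f : A))^[N] u = 0)
    (Θ : ℂ → A → A)
    (hΘ : ∀ (a : ℂ) (u : A) (N : ℕ),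
      (fun v => (f : A) * v - v * (f : A))^[N] u = 0 →
      Θ a u = ∑ i ∈ Finset.range N,
        genBinom a i • ((fun v => (f : A) * v - v * (f : A))^[i] u * ((f⁻¹ : Aˣ) : A) ^ i)) :
    Θ 0 = id ∧ ∀ a b : ℂ, Θ a ∘ Θ b = Θ (a + b) := by
  constructor
  · funext u
    obtain ⟨N, hN⟩ := hnil u
    have hN1 : (fun v => (f : A) * v - v * (f : A))^[N + 1] u = 0 :=
      Dit_eventually f N u hN (N + 1) (by omega)
    rw [hΘ 0 u (N + 1) hN1, Finset.sum_eq_single 0]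
    · simp [genBinom_zero]
    · intro i _ hi
      rw [genBinom_zero_left hi, zero_smul]
    · intro h
      exact absurd (Finset.mem_range.mpr (Nat.succ_pos N)) h
  · intro a b
    funext u
    simp only [Function.comp_apply]
    obtain ⟨N, hN⟩ := hnil u
    have hb := hΘ b u N hN
    have hterm : ∀ i, (fun v => (f : A) * v - v * (f : A))^[i] (Θ b u)
        = ∑ j ∈ Finset.range N, genBinom b j •
            ((fun v => (f : A) * v - v * (f : A))^[i + j] u * ((f⁻¹ : Aˣ) : A) ^ j) := by
      intro i
      rw [hb, Dit_sum]
      refine Finset.sum_congr rfl fun j _ => ?_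
      rw [Dit_smul, Dit_mul_inv_pow, ← Function.iterate_add_apply]
    have hDS : (fun v => (f : A) * v - v * (f : A))^[N] (Θ b u) = 0 := by
      rw [hterm N]
      refine Finset.sum_eq_zero fun j _ => ?_
      rw [Dit_eventually f N u hN (N + j) (by omega)]
      simp
    rw [hΘ a (Θ b u) N hDS]
    have key : ∑ i ∈ Finset.range N, genBinom a i •
          ((fun v => (f : A) * v - v * (f : A))^[i] (Θ b u) * ((f⁻¹ : Aˣ) : A) ^ i)
        = ∑ i ∈ Finset.range N, ∑ j ∈ Finset.range N, (genBinom a i * genBinom b j) •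
            ((fun v => (f : A) * v - v * (f : A))^[i + j] u * ((f⁻¹ : Aˣ) : A) ^ (i + j)) := by
      refine Finset.sum_congr rfl fun i _ => ?_
      rw [hterm i, Finset.sum_mul, Finset.smul_sum]
      refine Finset.sum_congr rfl fun j _ => ?_
      rw [smul_mul_assoc, smul_smul, mul_assoc, ← pow_add, Nat.add_comm j i]
    rw [key, triangle_sum N _ (fun i j hij => by
      rw [Dit_eventually f N u hN (i + j) hij]
      simp)]
    rw [hΘ (a + b) u N hN]
    refine Finset.sum_congr rfl fun n _ => ?_
    rw [genBinom_vandermonde, Finset.sum_smul]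
    refine Finset.sum_congr rfl fun i hi => ?_
    have h1 : i + (n - i) = n := by
      have := Finset.mem_range.mp hi
      omega
    rw [h1]
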